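/- (Global maximum at zero correlation) In the trivariate normal model with unit variances, correlations θ^S, θ^H > 0 between Q and the two scores, and correlation θ between the scores, for any thresholds τ^S, τ^H and any θ ∈ (0,1) with the covariance matrix positive definite: E[Q | Q^S > τ^S, Q^H > τ^H] evaluated at score-correlation 0 strictly exceeds its value at score-correlation θ. That is, θ^S·φ(τ^S)/Φ̄(τ^S) + θ^H·φ(τ^H)/Φ̄(τ^H) > [θ^S φ(τ^S) Φ̄((τ^H−θτ^S)/√(1−θ²)) + θ^H φ(τ^H) Φ̄((τ^S−θτ^H)/√(1−θ²))]/Φ̄₂(τ^S,τ^H;θ). -/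

import Mathlib

open Real MeasureTheory Set Matrix

/-- standard normal density -/
noncomputable def phi (x : ℝ) : ℝ := Real.exp (-x^2/2) / Real.sqrt (2*Real.pi)

/-- standard normal CDF -/
noncomputable def Phi (x : ℝ) : ℝ := ∫ t in Set.Iic x, phi t

/-- standard normal survival function -/
noncomputable def PhiBar (x : ℝ) : ℝ := ∫ t in Set.Ioi x, phi t

/-- standard bivariate normal density with correlation ρ -/
noncomputable def phi2 (x y ρ : ℝ) : ℝ :=
  Real.exp (-(x^2 - 2*ρ*x*y + y^2)/(2*(1-ρ^2))) / (2*Real.pi*Real.sqrt (1-ρ^2))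

/-- standard bivariate normal CDF with correlation ρ -/
noncomputable def Phi2 (a b ρ : ℝ) : ℝ := ∫ x in Set.Iic a, ∫ y in Set.Iic b, phi2 x y ρ

/-- standard bivariate normal joint survival function with correlation ρ -/
noncomputable def PhiBar2 (a b ρ : ℝ) : ℝ := ∫ x in Set.Ioi a, ∫ y in Set.Ioi b, phi2 x y ρ

/-- covariance matrix of (Q, Q^S, Q^H) -/
noncomputable def covM (θS θH θ : ℝ) : Matrix (Fin 3) (Fin 3) ℝ :=
  !![1, θS, θH; θS, 1, θ; θH, θ, 1]

/-- trivariate normal density of (Q, Q^S, Q^H) with zero means, unit variances and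
correlations θS = Corr(Q,Q^S), θH = Corr(Q,Q^H), θ = Corr(Q^S,Q^H) -/
noncomputable def pdf3 (θS θH θ : ℝ) (v : Fin 3 → ℝ) : ℝ :=
  Real.exp (-(v ⬝ᵥ ((covM θS θH θ)⁻¹ *ᵥ v))/2) /
    Real.sqrt ((2*Real.pi)^3 * (covM θS θH θ).det)

lemma phi_pos (x : ℝ) : 0 < phi x :=
  div_pos (Real.exp_pos _) (Real.sqrt_pos.mpr (by positivity))

lemma integrable_phi : Integrable phi := by
  have h : Integrable (fun x => Real.exp (-(1/2 : ℝ) * x^2) / Real.sqrt (2*Real.pi)) :=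
    (integrable_exp_neg_mul_sq (by norm_num)).div_const _
  exact h.congr (Filter.Eventually.of_forall fun x => by unfold phi; ring_nf)

lemma phiBar_pos (x : ℝ) : 0 < PhiBar x := by
  unfold PhiBar
  refine (setIntegral_pos_iff_support_of_nonneg_ae
    (Filter.Eventually.of_forall fun t => (phi_pos t).le) integrable_phi.integrableOn).mpr ?_
  have hsupp : Function.support phi = Set.univ := by
    ext t; simp [Function.mem_support, (phi_pos t).ne']
  rw [hsupp, Set.univ_inter]
  simp [Real.volume_Ioi]

lemma phiBar_strictAnti : StrictAnti PhiBar := by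
  intro u v huv
  have hsub : Set.Ioc u v ∪ Set.Ioi v = Set.Ioi u := Set.Ioc_union_Ioi_eq_Ioi huv.le
  have hdisj : Disjoint (Set.Ioc u v) (Set.Ioi v) := by
    simp [Set.disjoint_left]
  have hsplit : PhiBar u = (∫ t in Set.Ioc u v, phi t) + PhiBar v := by
    unfold PhiBar
    rw [← hsub, setIntegral_union hdisj measurableSet_Ioi
      integrable_phi.integrableOn integrable_phi.integrableOn]
  have hpos : 0 < ∫ t in Set.Ioc u v, phi t := by
    refine (setIntegral_pos_iff_support_of_nonneg_ae
      (Filter.Eventually.of_forall fun t => (phi_pos t).le) integrable_phi.integrableOn).mpr ?_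
    have hsupp : Function.support phi = Set.univ := by
      ext t; simp [Function.mem_support, (phi_pos t).ne']
    rw [hsupp, Set.univ_inter, Real.volume_Ioc]
    simp [huv]
  linarith

lemma phiBar_le (x : ℝ) : PhiBar x ≤ ∫ t, phi t :=
  setIntegral_le_integral integrable_phi (Filter.Eventually.of_forall fun t => (phi_pos t).le)

lemma integral_Ioi_comp_sub (g : ℝ → ℝ) (a c : ℝ) :
    ∫ x in Set.Ioi a, g (x - c) = ∫ x in Set.Ioi (a - c), g x := by
  rw [← integral_indicator (measurableSet_Ioi (a := a)),
    ← integral_indicator (measurableSet_Ioi (a := a - c)),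
    ← integral_sub_right_eq_self (fun x => (Set.Ioi (a-c)).indicator g x) c]
  congr 1
  ext x
  by_cases h : a < x
  · simp [Set.indicator_apply, h, sub_lt_sub_iff_right, Set.mem_Ioi]
  · simp [Set.indicator_apply, h, sub_lt_sub_iff_right, Set.mem_Ioi]

variable {θ : ℝ}

lemma phi2_factor (hθ : θ ∈ Set.Ioo (0:ℝ) 1) (x y : ℝ) :
    phi2 x y θ = phi x * (phi ((y - θ*x)/Real.sqrt (1-θ^2)) * (Real.sqrt (1-θ^2))⁻¹) := by
  obtain ⟨h0, h1⟩ := hθ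
  have h2 : (0:ℝ) < 1 - θ^2 := by nlinarith
  set s := Real.sqrt (1-θ^2) with hs_def
  have hs : 0 < s := Real.sqrt_pos.mpr h2
  have hs2 : s^2 = 1 - θ^2 := Real.sq_sqrt h2.le
  unfold phi2 phi
  have hexp : Real.exp (-(x^2 - 2*θ*x*y + y^2)/(2*(1-θ^2)))
      = Real.exp (-x^2/2) * Real.exp (-((y - θ*x)/s)^2/2) := by
    rw [← Real.exp_add]
    congr 1
    rw [div_pow, hs2]
    field_simp
    ring
  rw [hexp]
  have h2pi : Real.sqrt (2*Real.pi) * Real.sqrt (2*Real.pi) = 2*Real.pi := by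
    rw [Real.mul_self_sqrt (by positivity)]
  rw [← h2pi]
  ring_nf
  rw [Real.sqrt_sq (Real.sqrt_nonneg _)]
  rw [← hs_def]; ring

lemma inner_integral (hθ : θ ∈ Set.Ioo (0:ℝ) 1) (x b : ℝ) :
    ∫ y in Set.Ioi b, phi2 x y θ = phi x * PhiBar ((b - θ*x)/Real.sqrt (1-θ^2)) := by
  obtain ⟨h0, h1⟩ := hθ
  have h2 : (0:ℝ) < 1 - θ^2 := by nlinarith
  set s := Real.sqrt (1-θ^2) with hs_def
  have hs : 0 < s := Real.sqrt_pos.mpr h2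
  calc ∫ y in Set.Ioi b, phi2 x y θ
      = ∫ y in Set.Ioi b, phi x * (phi ((y - θ*x) * s⁻¹) * s⁻¹) := by
        refine setIntegral_congr_fun measurableSet_Ioi fun y _ => ?_
        rw [phi2_factor ⟨h0, h1⟩ x y, div_eq_mul_inv]
    _ = phi x * s⁻¹ * ∫ y in Set.Ioi b, phi ((y - θ*x) * s⁻¹) := by
        rw [← integral_const_mul]; congr 1; ext y; ring
    _ = phi x * s⁻¹ * ∫ y in Set.Ioi (b - θ*x), phi (y * s⁻¹) := by
        rw [integral_Ioi_comp_sub (fun u => phi (u * s⁻¹)) b (θ*x)]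
    _ = phi x * s⁻¹ * (s * ∫ y in Set.Ioi ((b - θ*x) * s⁻¹), phi y) := by
        rw [integral_comp_mul_right_Ioi phi _ (inv_pos.mpr hs)]
        simp [smul_eq_mul, inv_inv]
    _ = phi x * PhiBar ((b - θ*x)/s) := by
        unfold PhiBar; rw [div_eq_mul_inv]; field_simp

lemma phiBar_antitone : Antitone PhiBar := phiBar_strictAnti.antitone

lemma phi_continuous : Continuous phi := by
  unfold phi; fun_prop

lemma integrable_weighted (hθ : θ ∈ Set.Ioo (0:ℝ) 1) (b : ℝ) :
    Integrable (fun x => phi x * PhiBar ((b - θ*x)/Real.sqrt (1-θ^2))) := by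
  obtain ⟨h0, h1⟩ := hθ
  have h2 : (0:ℝ) < 1 - θ^2 := by nlinarith
  set s := Real.sqrt (1-θ^2) with hs_def
  have hs : 0 < s := Real.sqrt_pos.mpr h2
  set M := ∫ t, phi t with hM_def
  have hmono : Monotone (fun x : ℝ => PhiBar ((b - θ*x)/s)) := by
    intro u v huv
    apply phiBar_antitone
    rw [div_le_div_iff₀ hs hs]
    nlinarith [mul_nonneg (mul_nonneg h0.le (sub_nonneg.mpr huv)) hs.le]
  have hmeas : Measurable (fun x => phi x * PhiBar ((b - θ*x)/s)) :=
    (phi_continuous.measurable).mul hmono.measurable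
  refine (integrable_phi.const_mul M).mono hmeas.aestronglyMeasurable
    (Filter.Eventually.of_forall fun x => ?_)
  have h1' : 0 < PhiBar ((b - θ*x)/s) := phiBar_pos _
  have h2' : PhiBar ((b - θ*x)/s) ≤ M := phiBar_le _
  have h3' : (0:ℝ) < M := lt_of_lt_of_le h1' h2'
  rw [Real.norm_eq_abs, Real.norm_eq_abs, abs_of_pos (mul_pos (phi_pos x) h1'),
    abs_of_pos (mul_pos h3' (phi_pos x))]
  calc phi x * PhiBar ((b - θ*x)/s) ≤ phi x * M :=
        mul_le_mul_of_nonneg_left h2' (phi_pos x).le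
    _ = M * phi x := by ring

lemma key_lt (hθ : θ ∈ Set.Ioo (0:ℝ) 1) (a b : ℝ) :
    PhiBar a * PhiBar ((b - θ*a)/Real.sqrt (1-θ^2)) < PhiBar2 a b θ := by
  obtain ⟨h0, h1⟩ := hθ
  have h2 : (0:ℝ) < 1 - θ^2 := by nlinarith
  set s := Real.sqrt (1-θ^2) with hs_def
  have hs : 0 < s := Real.sqrt_pos.mpr h2
  have hform : PhiBar2 a b θ = ∫ x in Set.Ioi a, phi x * PhiBar ((b - θ*x)/s) := by
    unfold PhiBar2
    exact setIntegral_congr_fun measurableSet_Ioi fun x _ => inner_integral ⟨h0, h1⟩ x b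
  set c : ℝ → ℝ := fun x => PhiBar ((b - θ*x)/s) with hc_def
  have hint1 : IntegrableOn (fun x => phi x * c x) (Set.Ioi a) :=
    (integrable_weighted ⟨h0, h1⟩ b).integrableOn
  have hint2 : IntegrableOn (fun x => phi x * c a) (Set.Ioi a) :=
    (integrable_phi.mul_const _).integrableOn
  have hintd : IntegrableOn (fun x => phi x * c x - phi x * c a) (Set.Ioi a) := hint1.sub hint2
  have hclt : ∀ x ∈ Set.Ioi a, c a < c x := by
    intro x hx
    apply phiBar_strictAnti
    rw [div_lt_div_iff₀ hs hs]
    nlinarith [mul_pos (mul_pos h0 (sub_pos.mpr (Set.mem_Ioi.mp hx))) hs]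
  have hpos : 0 < ∫ x in Set.Ioi a, (phi x * c x - phi x * c a) := by
    refine (setIntegral_pos_iff_support_of_nonneg_ae ?_ hintd).mpr ?_
    · rw [Filter.EventuallyLE, ae_restrict_iff' measurableSet_Ioi]
      refine Filter.Eventually.of_forall fun x hx => ?_
      have := hclt x hx
      simp only [Pi.zero_apply]
      nlinarith [phi_pos x]
    · have hsub : Set.Ioi a ⊆ Function.support (fun x => phi x * c x - phi x * c a) := by
        intro x hx
        have := hclt x hx
        have h' : 0 < phi x * c x - phi x * c a := by nlinarith [phi_pos x]
        exact fun h => by simp [h] at h'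
      rw [Set.inter_eq_right.mpr hsub]
      simp [Real.volume_Ioi]
  have hsplit : ∫ x in Set.Ioi a, (phi x * c x - phi x * c a)
      = (∫ x in Set.Ioi a, phi x * c x) - PhiBar a * c a := by
    rw [integral_sub hint1 hint2, integral_mul_const]
    rfl
  rw [hform]
  rw [hsplit] at hpos
  linarith

lemma phi2_symm (x y ρ : ℝ) : phi2 x y ρ = phi2 y x ρ := by
  unfold phi2; ring_nf

lemma phiBar2_symm (hθ : θ ∈ Set.Ioo (0:ℝ) 1) (a b : ℝ) :
    PhiBar2 a b θ = PhiBar2 b a θ := by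
  obtain ⟨h0, h1⟩ := hθ
  have h2 : (0:ℝ) < 1 - θ^2 := by nlinarith
  set s := Real.sqrt (1-θ^2) with hs_def
  have hs : 0 < s := Real.sqrt_pos.mpr h2
  have h1θ : (0:ℝ) < 1 + θ := by linarith
  have hc : (0:ℝ) < 1/(2*(1+θ)) := by positivity
  have hcont : Continuous (fun p : ℝ × ℝ => phi2 p.1 p.2 θ) := by
    unfold phi2; fun_prop
  have hprod : Integrable (fun p : ℝ × ℝ =>
      (2*Real.pi*s)⁻¹ * (Real.exp (-(1/(2*(1+θ))) * p.1^2) *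
        Real.exp (-(1/(2*(1+θ))) * p.2^2))) ((volume : Measure ℝ).prod volume) :=
    ((integrable_exp_neg_mul_sq hc).mul_prod (integrable_exp_neg_mul_sq hc)).const_mul _
  have hbound : ∀ p : ℝ × ℝ, ‖phi2 p.1 p.2 θ‖ ≤
      ‖(2*Real.pi*s)⁻¹ * (Real.exp (-(1/(2*(1+θ))) * p.1^2) *
        Real.exp (-(1/(2*(1+θ))) * p.2^2))‖ := by
    rintro ⟨x, y⟩
    have hE : -(x^2 - 2*θ*x*y + y^2)/(2*(1-θ^2)) ≤
        -(1/(2*(1+θ))) * x^2 + -(1/(2*(1+θ))) * y^2 := by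
      have hrhs : -(1/(2*(1+θ)))*x^2 + -(1/(2*(1+θ)))*y^2
          = -((1-θ)*(x^2+y^2))/(2*(1-θ^2)) := by
        field_simp
        ring
      rw [hrhs]
      exact (div_le_div_iff_of_pos_right (show (0:ℝ) < 2*(1-θ^2) by positivity)).mpr
        (by nlinarith [sq_nonneg (x-y)])
    have hphi2 : phi2 x y θ = (2*Real.pi*s)⁻¹
        * Real.exp (-(x^2 - 2*θ*x*y + y^2)/(2*(1-θ^2))) := by
      unfold phi2; rw [← hs_def]; ring
    have hpos1 : (0:ℝ) < phi2 x y θ := by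
      rw [hphi2]; positivity
    rw [Real.norm_eq_abs, Real.norm_eq_abs, abs_of_pos hpos1, abs_of_pos (by positivity)]
    rw [hphi2, ← Real.exp_add]
    exact mul_le_mul_of_nonneg_left (Real.exp_le_exp.mpr hE) (by positivity)
  have hint : Integrable (fun p : ℝ × ℝ => phi2 p.1 p.2 θ)
      ((volume : Measure ℝ).prod volume) :=
    hprod.mono hcont.aestronglyMeasurable (Filter.Eventually.of_forall hbound)
  have hintr : Integrable (Function.uncurry fun x y => phi2 x y θ)
      ((volume.restrict (Set.Ioi a)).prod (volume.restrict (Set.Ioi b))) := by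
    rw [Measure.prod_restrict]
    exact hint.restrict
  have hswap := integral_integral_swap hintr
  unfold PhiBar2
  rw [hswap]
  refine setIntegral_congr_fun measurableSet_Ioi fun y _ => ?_
  refine setIntegral_congr_fun measurableSet_Ioi fun x _ => ?_
  exact phi2_symm x y θ


/-- expected hire quality is globally maximized at zero score correlation. -/
theorem hire_quality_max_at_zero_corr (θS θH θ τS τH : ℝ)
    (hS : 0 < θS) (hH : 0 < θH) (hθ : θ ∈ Set.Ioo (0 : ℝ) 1)
    (hpd : (covM θS θH θ).PosDef) :
    θS * phi τS / PhiBar τS + θH * phi τH / PhiBar τH >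
    (θS * phi τS * PhiBar ((τH - θ*τS) / Real.sqrt (1 - θ^2)) +
      θH * phi τH * PhiBar ((τS - θ*τH) / Real.sqrt (1 - θ^2))) /
      PhiBar2 τS τH θ := by
  set s := Real.sqrt (1 - θ^2) with hs_def
  set A := θS * phi τS with hA_def
  set B := θH * phi τH with hB_def
  have hA : 0 < A := mul_pos hS (phi_pos _)
  have hB : 0 < B := mul_pos hH (phi_pos _)
  set u := PhiBar ((τH - θ*τS)/s) with hu_def
  set v := PhiBar ((τS - θ*τH)/s) with hv_def
  set p := PhiBar τS with hp_def
  set q := PhiBar τH with hq_def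
  set P := PhiBar2 τS τH θ with hP_def
  have hu : 0 < u := phiBar_pos _
  have hv : 0 < v := phiBar_pos _
  have hp : 0 < p := phiBar_pos _
  have hq : 0 < q := phiBar_pos _
  have key1 : p * u < P := key_lt hθ τS τH
  have key2 : q * v < P := by
    have := key_lt hθ τH τS
    rwa [← phiBar2_symm hθ τS τH] at this
  have hP : 0 < P := lt_trans (mul_pos hp hu) key1
  rw [gt_iff_lt, add_div]
  have t1 : A * u / P < A / p := by
    rw [div_lt_div_iff₀ hP hp]
    nlinarith
  have t2 : B * v / P < B / q := by
    rw [div_lt_div_iff₀ hP hq]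
    nlinarith
  linarith
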